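/- Let β be a set of ordered pairs of distinct items from {1,…,n} (each pair (i,i') ∈ β meaning i is ranked above i'), and let π be a permutation consistent with β. Suppose (a₁,b₁), …, (a_ℓ,b_ℓ) are ℓ pairs of items, all 2ℓ items distinct, such that for each k the items a_k and b_k occupy adjacent positions in π, and the permutation obtained from π by swapping only a_k and b_k is also consistent with β. Then for every subset T ⊆ {1,…,ℓ}, the permutation obtained from π by simultaneously swapping the pairs indexed by T is consistent with β. In particular, the number of permutations consistent with β is at least 2^ℓ. -/

import Mathlib

/-- A permutation (ranking) `σ` is consistent with a set `β` of directed comparison pairs if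
for every `(i, i') ∈ β`, item `i` is assigned a smaller rank than item `i'`. -/
def ConsistentWith {n : ℕ} (β : Set (Fin n × Fin n)) (σ : Equiv.Perm (Fin n)) : Prop :=
  ∀ p ∈ β, σ p.1 < σ p.2

/- STATEMENT 12: Let `π` be consistent with `β`, and let `(a₁,b₁), …, (a_ℓ,b_ℓ)` be pairs of
items, all `2ℓ` items distinct, such that each pair occupies adjacent positions in `π` and
swapping any single pair yields a permutation still consistent with `β`. Then simultaneously
swapping any subset `T` of the pairs (via any permutation `e` of items that exchanges `a_k`
and `b_k` for `k ∈ T` and fixes all other items) yields a permutation consistent with `β`.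
In particular there are at least `2^ℓ` permutations consistent with `β`. -/
theorem flippable_pairs_generate_topological_orderings
    (n ℓ : ℕ) (β : Set (Fin n × Fin n))
    (π : Equiv.Perm (Fin n)) (hπ : ConsistentWith β π)
    (a b : Fin ℓ → Fin n)
    (hab : ∀ k, a k ≠ b k)
    (hdist : ∀ k k', k ≠ k' →
      a k ≠ a k' ∧ a k ≠ b k' ∧ b k ≠ a k' ∧ b k ≠ b k')
    (hadj : ∀ k, (π (a k) : ℕ) + 1 = (π (b k) : ℕ) ∨ (π (b k) : ℕ) + 1 = (π (a k) : ℕ))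
    (hflip : ∀ k, ConsistentWith β ((Equiv.swap (a k) (b k)).trans π)) :
    (∀ T : Finset (Fin ℓ), ∀ e : Equiv.Perm (Fin n),
      (∀ k ∈ T, e (a k) = b k ∧ e (b k) = a k) →
      (∀ i : Fin n, (∀ k ∈ T, i ≠ a k ∧ i ≠ b k) → e i = i) →
      ConsistentWith β (e.trans π)) ∧
    2 ^ ℓ ≤ Set.ncard {σ : Equiv.Perm (Fin n) | ConsistentWith β σ} := by
  -- Main part 1
  have main : ∀ T : Finset (Fin ℓ), ∀ e : Equiv.Perm (Fin n),
      (∀ k ∈ T, e (a k) = b k ∧ e (b k) = a k) →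
      (∀ i : Fin n, (∀ k ∈ T, i ≠ a k ∧ i ≠ b k) → e i = i) →
      ConsistentWith β (e.trans π) := by
    intro T e he1 he2 p hp
    obtain ⟨i, i'⟩ := p
    simp only [Equiv.trans_apply]
    have hu : π i < π i' := hπ _ hp
    have hii' : i ≠ i' := fun h => by simp [h] at hu
    have classify : ∀ j : Fin n, e j = j ∨
        ∃ k ∈ T, (j = a k ∧ e j = b k) ∨ (j = b k ∧ e j = a k) := by
      intro j
      by_cases h : ∀ k ∈ T, j ≠ a k ∧ j ≠ b k
      · exact Or.inl (he2 j h)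
      · right
        push_neg at h
        obtain ⟨k, hk, hjk⟩ := h
        by_cases hja : j = a k
        · exact ⟨k, hk, Or.inl ⟨hja, hja ▸ (he1 k hk).1⟩⟩
        · exact ⟨k, hk, Or.inr ⟨hjk hja, (hjk hja) ▸ (he1 k hk).2⟩⟩
    -- the flipped permutation for pair k, applied to (i,i')
    have hflip' : ∀ k, π (Equiv.swap (a k) (b k) i) < π (Equiv.swap (a k) (b k) i') := by
      intro k
      have := hflip k (i, i') hp
      simpa using this
    -- a point in pair k is fixed by swap k' for k' ≠ k
    have fix_swap : ∀ (j : Fin n) (k k' : Fin ℓ), k ≠ k' → (j = a k ∨ j = b k) →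
        Equiv.swap (a k') (b k') j = j := by
      intro j k k' hkk' hj
      obtain ⟨h1, h2, h3, h4⟩ := hdist k k' hkk'
      apply Equiv.swap_apply_of_ne_of_ne
      · rcases hj with rfl | rfl <;> assumption
      · rcases hj with rfl | rfl <;> assumption
    rcases classify i with hei | ⟨k, hk, hik⟩
    · rcases classify i' with hei' | ⟨k', hk', hik'⟩
      · rw [hei, hei']; exact hu
      · -- i fixed, i' in pair k'
        have hi_not : i ≠ a k' ∧ i ≠ b k' := by
          constructor <;> rintro rfl
          · have : a k' = b k' := by rw [← (he1 k' hk').1, hei]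
            exact hab k' this
          · have : b k' = a k' := by rw [← (he1 k' hk').2, hei]
            exact hab k' this.symm
        have := hflip' k'
        rw [Equiv.swap_apply_of_ne_of_ne hi_not.1 hi_not.2] at this
        rcases hik' with ⟨rfl, hei'⟩ | ⟨rfl, hei'⟩
        · rw [Equiv.swap_apply_left] at this
          rw [hei, hei']; exact this
        · rw [Equiv.swap_apply_right] at this
          rw [hei, hei']; exact this
    · rcases classify i' with hei' | ⟨k', hk', hik'⟩
      · -- i in pair k, i' fixed
        have hi'_not : i' ≠ a k ∧ i' ≠ b k := by
          constructor <;> rintro rfl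
          · have : a k = b k := by rw [← (he1 k hk).1, hei']
            exact hab k this
          · have : b k = a k := by rw [← (he1 k hk).2, hei']
            exact hab k this.symm
        have := hflip' k
        rw [Equiv.swap_apply_of_ne_of_ne hi'_not.1 hi'_not.2] at this
        rcases hik with ⟨rfl, hei⟩ | ⟨rfl, hei⟩
        · rw [Equiv.swap_apply_left] at this
          rw [hei, hei']; exact this
        · rw [Equiv.swap_apply_right] at this
          rw [hei, hei']; exact this
      · by_cases hkk' : k = k'
        · -- same pair: contradiction
          subst hkk'
          have := hflip' k
          exfalso
          rcases hik with ⟨rfl, _⟩ | ⟨rfl, _⟩ <;> rcases hik' with ⟨h', _⟩ | ⟨h', _⟩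
          · exact hii' h'.symm
          · subst h'
            rw [Equiv.swap_apply_left, Equiv.swap_apply_right] at this
            exact absurd hu (not_lt.2 this.le)
          · subst h'
            rw [Equiv.swap_apply_left, Equiv.swap_apply_right] at this
            exact absurd hu (not_lt.2 this.le)
          · exact hii' h'.symm
        · -- distinct pairs
          have hx : (π (e i) : ℕ) ≤ (π i : ℕ) + 1 := by
            have := hadj k
            rcases hik with ⟨rfl, hei⟩ | ⟨rfl, hei⟩ <;> rw [hei] <;> omega
          have hy : (π i : ℕ) < (π (e i') : ℕ) := by
            have h := hflip' k'
            rw [fix_swap i k k' hkk' (by rcases hik with ⟨h, _⟩ | ⟨h, _⟩ <;> [exact Or.inl h; exact Or.inr h])] at h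
            rcases hik' with ⟨rfl, hei'⟩ | ⟨rfl, hei'⟩
            · rw [Equiv.swap_apply_left] at h; rw [hei']; exact h
            · rw [Equiv.swap_apply_right] at h; rw [hei']; exact h
          have hxy : π (e i) ≠ π (e i') :=
            fun h => hii' (e.injective (π.injective h))
          have hxy' : (π (e i) : ℕ) ≠ (π (e i') : ℕ) := fun h => hxy (Fin.ext h)
          have : (π (e i) : ℕ) < (π (e i') : ℕ) := by omega
          exact this
  refine ⟨main, ?_⟩
  -- Part 2: counting
  classical
  set f : Fin ℓ → Equiv.Perm (Fin n) := fun k => Equiv.swap (a k) (b k) with hf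
  have hdisj : ∀ k k', k ≠ k' → (f k).Disjoint (f k') := by
    intro k k' hkk' x
    by_cases hx : x = a k' ∨ x = b k'
    · left
      obtain ⟨h1, h2, h3, h4⟩ := hdist k k' hkk'
      apply Equiv.swap_apply_of_ne_of_ne
      · rcases hx with rfl | rfl
        · exact fun h => h1 h.symm
        · exact fun h => h2 h.symm
      · rcases hx with rfl | rfl
        · exact fun h => h3 h.symm
        · exact fun h => h4 h.symm
    · right
      push_neg at hx
      exact Equiv.swap_apply_of_ne_of_ne hx.1 hx.2
  have hcomm : ∀ (T : Finset (Fin ℓ)), ∀ x ∈ (T : Set (Fin ℓ)), ∀ y ∈ (T : Set (Fin ℓ)),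
      x ≠ y → Commute (f x) (f y) :=
    fun T x _ y _ hxy => (hdisj x y hxy).commute
  set E : Finset (Fin ℓ) → Equiv.Perm (Fin n) :=
    fun T => T.noncommProd f (hcomm T) with hE
  have Espec : ∀ T : Finset (Fin ℓ),
      (∀ k ∈ T, E T (a k) = b k ∧ E T (b k) = a k) ∧
      (∀ i : Fin n, (∀ k ∈ T, i ≠ a k ∧ i ≠ b k) → E T i = i) := by
    intro T
    induction T using Finset.induction_on with
    | empty =>
      constructor
      · intro k hk; simp at hk
      · intro i _
        simp [hE, Finset.noncommProd_empty]
        exact congrArg (fun g : Equiv.Perm (Fin n) => g i) (Finset.noncommProd_empty f _)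
    | @insert j T' hj ih =>
      have hins : E (insert j T') = f j * E T' := by
        simp [hE, Finset.noncommProd_insert_of_notMem _ _ _ _ hj]
        exact Finset.noncommProd_insert_of_notMem _ _ _ _ hj
      constructor
      · intro k hk
        rcases Finset.mem_insert.1 hk with rfl | hkT
        · have ha : E T' (a k) = a k := by
            apply ih.2
            intro k' hk'
            have hkk' : k ≠ k' := fun h => hj (h ▸ hk')
            exact ⟨(hdist k k' hkk').1, (hdist k k' hkk').2.1⟩
          have hb : E T' (b k) = b k := by
            apply ih.2
            intro k' hk'
            have hkk' : k ≠ k' := fun h => hj (h ▸ hk')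
            exact ⟨(hdist k k' hkk').2.2.1, (hdist k k' hkk').2.2.2⟩
          rw [hins]
          constructor
          · simp only [Equiv.Perm.mul_apply, ha, hf]
            exact Equiv.swap_apply_left _ _
          · simp only [Equiv.Perm.mul_apply, hb, hf]
            exact Equiv.swap_apply_right _ _
        · have hkj : k ≠ j := fun h => hj (h ▸ hkT)
          obtain ⟨h1, h2, h3, h4⟩ := hdist k j hkj
          rw [hins]
          constructor
          · simp only [Equiv.Perm.mul_apply, (ih.1 k hkT).1, hf]
            exact Equiv.swap_apply_of_ne_of_ne h3 h4
          · simp only [Equiv.Perm.mul_apply, (ih.1 k hkT).2, hf]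
            exact Equiv.swap_apply_of_ne_of_ne h1 h2
      · intro i hi
        rw [hins]
        have h0 : E T' i = i := ih.2 i (fun k hk => hi k (Finset.mem_insert_of_mem hk))
        have h1 := hi j (Finset.mem_insert_self j T')
        simp only [Equiv.Perm.mul_apply, h0, hf]
        exact Equiv.swap_apply_of_ne_of_ne h1.1 h1.2
  -- fixed-point characterization of membership
  have Eout : ∀ (T : Finset (Fin ℓ)) (k : Fin ℓ), k ∉ T → E T (a k) = a k := by
    intro T k hk
    apply (Espec T).2
    intro k' hk'
    have hkk' : k ≠ k' := fun h => hk (h ▸ hk')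
    exact ⟨(hdist k k' hkk').1, (hdist k k' hkk').2.1⟩
  set g : Finset (Fin ℓ) → {σ : Equiv.Perm (Fin n) // ConsistentWith β σ} :=
    fun T => ⟨(E T).trans π, main T (E T) (Espec T).1 (Espec T).2⟩ with hg
  have hginj : Function.Injective g := by
    intro T S hTS
    have hES : E T = E S := by
      have h : (E T).trans π = (E S).trans π := congrArg Subtype.val hTS
      apply Equiv.ext
      intro x
      have hx : π (E T x) = π (E S x) := by
        have := congrFun (congrArg (fun (q : Equiv.Perm (Fin n)) => (q : Fin n → Fin n)) h) x
        simpa using this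
      exact π.injective hx
    ext k
    constructor
    · intro hkT
      by_contra hkS
      have h1 : E T (a k) = b k := ((Espec T).1 k hkT).1
      have h2 : E S (a k) = a k := Eout S k hkS
      exact hab k (by rw [← h1, hES, h2])
    · intro hkS
      by_contra hkT
      have h1 : E S (a k) = b k := ((Espec S).1 k hkS).1
      have h2 : E T (a k) = a k := Eout T k hkT
      exact hab k (by rw [← h2, hES, h1])
  have hfin : Finite {σ : Equiv.Perm (Fin n) // ConsistentWith β σ} := by
    infer_instance
  calc 2 ^ ℓ = Nat.card (Finset (Fin ℓ)) := by
        simp [Nat.card_eq_fintype_card]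
    _ ≤ Nat.card {σ : Equiv.Perm (Fin n) // ConsistentWith β σ} :=
        Nat.card_le_card_of_injective g hginj
    _ = Set.ncard {σ : Equiv.Perm (Fin n) | ConsistentWith β σ} := rfl
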